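/- Let X be a random variable with distribution P_X on a finite set 𝒳 and let F be a two-universal random predicate on 𝒳 independent of X. Then for every family {ρ_x}_{x∈𝒳} of density matrices on ℂ^d, d(F(X)|⟨ρ_X,F⟩) ≤ (1/2)·√d·√( Σ_{x∈𝒳} P_X(x)² ). -/

import Mathlib

open Finset ComplexOrder

/-- The distance of a distribution `P` on a finite set `Z` from the uniform
distribution: `d(P) = (1/2) ∑_z |P z - 1/|Z||`. -/
noncomputable def distUnif {Z : Type*} [Fintype Z] (P : Z → ℝ) : ℝ :=
  (1 / 2) * ∑ z, |P z - 1 / (Fintype.card Z : ℝ)|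

/-- For a joint distribution `P` on `W × Z` (given as `P : W → Z → ℝ`), the expected
distance of `Z` from uniform given `W`: `d(Z|W) = ∑_w P_W(w) · d(P_{Z|W=w})`. -/
noncomputable def dCond {W Z : Type*} [Fintype W] [Fintype Z] (P : W → Z → ℝ) : ℝ :=
  ∑ w, (∑ z, P w z) * distUnif (fun z => P w z / ∑ z', P w z')

/-- A POVM on `ℂ^d` with an arbitrary finite outcome set: a family `{E_w}` of positive
semidefinite `d×d` complex matrices summing to the identity. -/
structure POVM (d : ℕ) where
  ι : Type
  [fin : Fintype ι]
  E : ι → Matrix (Fin d) (Fin d) ℂ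
  psd : ∀ w, (E w).PosSemidef
  sum_eq : ∑ w, E w = 1

attribute [instance] POVM.fin

/-- Given `X` with distribution `PX` on `𝒳`, a family `{ρ_x}` of density matrices on
`ℂ^d`, and a function `g : 𝒳 → 𝒵`, the distance of `g(X)` from uniform given `ρ_X`:
the supremum over all POVMs `{E_w}` (with arbitrary finite outcome sets) of
`d(g(X)|W)`, where `W` is the measurement outcome, with joint distribution
`P_{X W}(x,w) = PX x · tr(E_w ρ_x)`. -/
noncomputable def dQuant {d : ℕ} {𝒳 𝒵 : Type} [Fintype 𝒳] [Fintype 𝒵] [DecidableEq 𝒵]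
    (PX : 𝒳 → ℝ) (ρ : 𝒳 → Matrix (Fin d) (Fin d) ℂ) (g : 𝒳 → 𝒵) : ℝ :=
  sSup {r : ℝ | ∃ M : POVM d,
    r = dCond (fun (w : M.ι) (z : 𝒵) =>
      ∑ x ∈ univ.filter (fun x => g x = z), PX x * ((M.E w) * ρ x).trace.re)}

namespace BinHashAux

open Matrix

variable {d : ℕ}

lemma diag_re_nonneg {M : Matrix (Fin d) (Fin d) ℂ} (hM : M.PosSemidef) (i : Fin d) :
    0 ≤ (M i i).re := by
  have h := hM.re_dotProduct_nonneg (Pi.single i 1)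
  simpa [dotProduct, Matrix.mulVec, Pi.single_apply, mul_comm] using h

lemma trace_mul_eq {A : Matrix (Fin d) (Fin d) ℂ} (hA : A.IsHermitian)
    (E : Matrix (Fin d) (Fin d) ℂ) :
    (E * A).trace = ∑ i, (hA.eigenvalues i : ℂ) *
      ((star (hA.eigenvectorUnitary : Matrix (Fin d) (Fin d) ℂ) * E *
        (hA.eigenvectorUnitary : Matrix (Fin d) (Fin d) ℂ)) i i) := by
  nth_rewrite 1 [hA.spectral_theorem]
  rw [Unitary.conjStarAlgAut_apply]
  rw [← mul_assoc, ← mul_assoc, trace_mul_cycle, ← mul_assoc]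
  simp [Matrix.trace, Matrix.mul_diagonal, Function.comp, mul_comm, Matrix.diag]

lemma star_mul_self_unitary {A : Matrix (Fin d) (Fin d) ℂ} (hA : A.IsHermitian) :
    star (hA.eigenvectorUnitary : Matrix (Fin d) (Fin d) ℂ) *
      (hA.eigenvectorUnitary : Matrix (Fin d) (Fin d) ℂ) = 1 := by
  exact Unitary.coe_star_mul_self hA.eigenvectorUnitary

lemma trace_re_eq_sum_eigen {A : Matrix (Fin d) (Fin d) ℂ} (hA : A.IsHermitian) :
    A.trace.re = ∑ i, hA.eigenvalues i := by
  have h := trace_mul_eq hA 1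
  rw [one_mul, mul_one, star_mul_self_unitary hA] at h
  rw [h]
  simp [Complex.re_sum]

lemma trace_sq_re {A : Matrix (Fin d) (Fin d) ℂ} (hA : A.IsHermitian) :
    ((A * A).trace).re = ∑ i, hA.eigenvalues i ^ 2 := by
  have h := trace_mul_eq hA A
  have hdg : star (hA.eigenvectorUnitary : Matrix (Fin d) (Fin d) ℂ) * A *
      (hA.eigenvectorUnitary : Matrix (Fin d) (Fin d) ℂ) = diagonal (RCLike.ofReal ∘ hA.eigenvalues) := by
    simpa [Unitary.conjStarAlgAut_star_apply] using hA.conjStarAlgAut_star_eigenvectorUnitary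
  rw [hdg] at h
  rw [h]
  simp [Complex.re_sum, Matrix.diagonal_apply_eq, pow_two]

lemma cval_nonneg {A E : Matrix (Fin d) (Fin d) ℂ} (hA : A.IsHermitian)
    (hE : E.PosSemidef) (i : Fin d) :
    0 ≤ ((star (hA.eigenvectorUnitary : Matrix (Fin d) (Fin d) ℂ) * E *
        (hA.eigenvectorUnitary : Matrix (Fin d) (Fin d) ℂ)) i i).re := by
  apply diag_re_nonneg
  have := hE.conjTranspose_mul_mul_same (hA.eigenvectorUnitary : Matrix (Fin d) (Fin d) ℂ)
  simpa [Matrix.star_eq_conjTranspose] using this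

lemma trace_mul_re_nonneg {A E : Matrix (Fin d) (Fin d) ℂ} (hA : A.PosSemidef)
    (hE : E.PosSemidef) : 0 ≤ ((E * A).trace).re := by
  rw [trace_mul_eq hA.1 E, Complex.re_sum]
  apply Finset.sum_nonneg
  intro i _
  rw [Complex.re_ofReal_mul]
  exact mul_nonneg (hA.eigenvalues_nonneg i) (cval_nonneg hA.1 hE i)

lemma sum_abs_trace_le {A : Matrix (Fin d) (Fin d) ℂ} (hA : A.IsHermitian) (M : POVM d) :
    ∑ w, |((M.E w * A).trace).re| ≤ ∑ i, |hA.eigenvalues i| := by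
  set U : Matrix (Fin d) (Fin d) ℂ := (hA.eigenvectorUnitary : Matrix (Fin d) (Fin d) ℂ) with hU
  have hsum : ∀ i, ∑ w, ((star U * M.E w * U) i i).re = 1 := by
    intro i
    have h1 : ∑ w, star U * M.E w * U = 1 := by
      rw [← Finset.sum_mul, ← Finset.mul_sum, M.sum_eq, mul_one, hU,
        star_mul_self_unitary hA]
    have h2 : ∑ w, (star U * M.E w * U) i i = 1 := by
      rw [← Matrix.sum_apply i i univ (fun w => star U * M.E w * U), h1, Matrix.one_apply_eq]
    calc ∑ w, ((star U * M.E w * U) i i).re = (∑ w, (star U * M.E w * U) i i).re :=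
          (Complex.re_sum _ _).symm
      _ = 1 := by rw [h2]; simp
  have key : ∀ w, |((M.E w * A).trace).re|
      ≤ ∑ i, |hA.eigenvalues i| * ((star U * M.E w * U) i i).re := by
    intro w
    rw [trace_mul_eq hA (M.E w), Complex.re_sum]
    refine (Finset.abs_sum_le_sum_abs _ _).trans (Finset.sum_le_sum fun i _ => ?_)
    rw [Complex.re_ofReal_mul, abs_mul, abs_of_nonneg (cval_nonneg hA (M.psd w) i)]
  calc ∑ w, |((M.E w * A).trace).re|
      ≤ ∑ w, ∑ i, |hA.eigenvalues i| * ((star U * M.E w * U) i i).re :=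
        Finset.sum_le_sum fun w _ => key w
    _ = ∑ i, |hA.eigenvalues i| * ∑ w, ((star U * M.E w * U) i i).re := by
        rw [Finset.sum_comm]; simp [Finset.mul_sum]
    _ = ∑ i, |hA.eigenvalues i| := by simp [hsum]

lemma dCond_bool_term (a b : ℝ) (ha : 0 ≤ a) (hb : 0 ≤ b) :
    (a + b) * distUnif (fun z : Bool => (if z then a else b) / (a + b))
      = (1/2) * |a - b| := by
  rw [distUnif, Fintype.sum_bool]
  simp only [reduceIte, Bool.false_eq_true, if_false, Fintype.card_bool, Nat.cast_ofNat]
  rcases eq_or_lt_of_le (by positivity : (0:ℝ) ≤ a + b) with h | h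
  · have ha0 : a = 0 := by linarith
    have hb0 : b = 0 := by linarith
    simp [ha0, hb0]
  · have h1 : a / (a+b) - 1/2 = (a - b) / (2*(a+b)) := by field_simp; ring
    have h2 : b / (a+b) - 1/2 = -((a - b) / (2*(a+b))) := by field_simp; ring
    rw [h1, h2, abs_neg, abs_div, abs_of_pos (by linarith : (0:ℝ) < 2*(a+b))]
    field_simp
    ring

end BinHashAux

open BinHashAux

/-- **Corollary `cor:binhash`**: for a random variable `X` with distribution `PX` on a
finite set `𝒳` and a two-universal random predicate `F` (distribution `PF` on functions
`𝒳 → {0,1}`, independent of `X`, with `Pr[F(x) = F(x')] ≤ 1/2` for `x ≠ x'`), and any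
family `{ρ_x}` of density matrices on `ℂ^d`,
`d(F(X)|⟨ρ_X,F⟩) ≤ (1/2)·√d·√(∑_x P_X(x)²)`. -/
theorem cor_binhash {d : ℕ} {𝒳 : Type} [Fintype 𝒳] [DecidableEq 𝒳]
    (PX : 𝒳 → ℝ) (hPX0 : ∀ x, 0 ≤ PX x) (hPX1 : ∑ x, PX x = 1)
    (PF : (𝒳 → Bool) → ℝ) (hPF0 : ∀ f, 0 ≤ PF f) (hPF1 : ∑ f, PF f = 1)
    (hFuniv : ∀ x x' : 𝒳, x ≠ x' →
      ∑ f ∈ univ.filter (fun f => f x = f x'), PF f ≤ 1 / 2)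
    (ρ : 𝒳 → Matrix (Fin d) (Fin d) ℂ)
    (hρ : ∀ x, (ρ x).PosSemidef) (hρt : ∀ x, (ρ x).trace = 1) :
    ∑ f, PF f * dQuant PX ρ f
      ≤ (1 / 2) * Real.sqrt d * Real.sqrt (∑ x, PX x ^ 2) := by
  classical
  set ε : (𝒳 → Bool) → 𝒳 → ℝ := fun f x => if f x then 1 else -1 with hε
  set Δ : (𝒳 → Bool) → Matrix (Fin d) (Fin d) ℂ :=
    fun f => ∑ x, ((PX x * ε f x : ℝ) : ℂ) • ρ x with hΔ
  have hherm : ∀ f, (Δ f).IsHermitian := by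
    intro f
    rw [hΔ]
    unfold Matrix.IsHermitian
    rw [Matrix.conjTranspose_sum]
    refine Finset.sum_congr rfl fun x _ => ?_
    rw [Matrix.conjTranspose_smul, (hρ x).1]
    simp
  set qf : (𝒳 → Bool) → ℝ := fun f => ((Δ f * Δ f).trace).re with hqf
  have hq_nonneg : ∀ f, 0 ≤ qf f := by
    intro f
    rw [hqf]
    simp only
    rw [trace_sq_re (hherm f)]
    positivity
  -- Step A
  have stepA : ∀ f, dQuant PX ρ f ≤ (1/2) * Real.sqrt d * Real.sqrt (qf f) := by
    intro f
    apply Real.sSup_le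
    · rintro r ⟨M, rfl⟩
      set P : M.ι → Bool → ℝ := fun w z =>
        ∑ x ∈ univ.filter (fun x => f x = z), PX x * ((M.E w) * ρ x).trace.re with hP
      have hP0 : ∀ w z, 0 ≤ P w z := fun w z =>
        Finset.sum_nonneg fun x _ => mul_nonneg (hPX0 x) (trace_mul_re_nonneg (hρ x) (M.psd w))
      have hPdiff : ∀ w, P w true - P w false = ((M.E w * Δ f).trace).re := by
        intro w
        have h1 : (M.E w * Δ f).trace = ∑ x, ((PX x * ε f x : ℝ) : ℂ) * (M.E w * ρ x).trace := by
          rw [hΔ]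
          simp only [Finset.mul_sum, Matrix.mul_smul, Matrix.trace_sum, Matrix.trace_smul,
            smul_eq_mul]
        rw [h1, Complex.re_sum]
        simp only [Complex.re_ofReal_mul]
        rw [← Finset.sum_filter_add_sum_filter_not univ (fun x => f x = true)
          (fun x => (PX x * ε f x) * ((M.E w) * ρ x).trace.re)]
        have e1 : univ.filter (fun x => ¬ f x = true) = univ.filter (fun x => f x = false) := by
          simp [Bool.not_eq_true]
        rw [e1]
        have t1 : ∑ x ∈ univ.filter (fun x => f x = true),
            (PX x * ε f x) * ((M.E w) * ρ x).trace.re = P w true := by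
          rw [hP]
          refine Finset.sum_congr rfl fun x hx => ?_
          simp only [mem_filter] at hx
          simp [hε, hx.2]
        have t2 : ∑ x ∈ univ.filter (fun x => f x = false),
            (PX x * ε f x) * ((M.E w) * ρ x).trace.re = -(P w false) := by
          rw [hP, ← Finset.sum_neg_distrib]
          refine Finset.sum_congr rfl fun x hx => ?_
          simp only [mem_filter] at hx
          simp [hε, hx.2]
        rw [t1, t2]
        ring
      have hdc : dCond P = (1/2) * ∑ w, |((M.E w * Δ f).trace).re| := by
        rw [dCond, Finset.mul_sum]
        refine Finset.sum_congr rfl fun w _ => ?_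
        have e0 : ∑ z, P w z = P w true + P w false := Fintype.sum_bool _
        rw [e0]
        have e2 : (fun z => P w z / (P w true + P w false))
            = fun z : Bool => (if z then P w true else P w false) / (P w true + P w false) := by
          funext z
          cases z <;> simp
        rw [e2, dCond_bool_term _ _ (hP0 w true) (hP0 w false), hPdiff w]
      rw [hdc]
      have h1 := sum_abs_trace_le (hherm f) M
      have hcs : (∑ i, |(hherm f).eigenvalues i|)^2 ≤ (d : ℝ) * qf f := by
        have h2 := sq_sum_le_card_mul_sum_sq
          (s := (univ : Finset (Fin d))) (f := fun i => |(hherm f).eigenvalues i|)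
        have h3 : qf f = ∑ i, (hherm f).eigenvalues i ^ 2 := trace_sq_re (hherm f)
        simpa [sq_abs, h3, card_univ] using h2
      have h4 : ∑ i, |(hherm f).eigenvalues i| ≤ Real.sqrt d * Real.sqrt (qf f) := by
        calc ∑ i, |(hherm f).eigenvalues i|
            = Real.sqrt ((∑ i, |(hherm f).eigenvalues i|)^2) :=
              (Real.sqrt_sq (Finset.sum_nonneg fun i _ => abs_nonneg _)).symm
          _ ≤ Real.sqrt ((d:ℝ) * qf f) := Real.sqrt_le_sqrt hcs
          _ = Real.sqrt d * Real.sqrt (qf f) := Real.sqrt_mul (by positivity) _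
      calc (1/2) * ∑ w, |((M.E w * Δ f).trace).re|
          ≤ (1/2) * (Real.sqrt d * Real.sqrt (qf f)) := by
            apply mul_le_mul_of_nonneg_left (h1.trans h4) (by norm_num)
        _ = (1/2) * Real.sqrt d * Real.sqrt (qf f) := by ring
    · positivity
  -- trace facts about ρ
  have hRnn : ∀ x y, 0 ≤ ((ρ x * ρ y).trace).re := fun x y =>
    trace_mul_re_nonneg (hρ y) (hρ x)
  have hR1 : ∀ x, ((ρ x * ρ x).trace).re ≤ 1 := by
    intro x
    rw [trace_sq_re (hρ x).1]
    have h1 : ∑ i, (hρ x).1.eigenvalues i = 1 := by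
      have h := trace_re_eq_sum_eigen (hρ x).1
      rw [hρt x] at h
      simpa using h.symm
    calc ∑ i, (hρ x).1.eigenvalues i ^ 2 ≤ (∑ i, (hρ x).1.eigenvalues i)^2 :=
          Finset.sum_sq_le_sq_sum_of_nonneg (fun i _ => (hρ x).eigenvalues_nonneg i)
      _ = 1 := by rw [h1]; norm_num
  -- Step B : average of qf
  have hqf_expand : ∀ f, qf f
      = ∑ x, ∑ y, (PX x * ε f x) * (PX y * ε f y) * ((ρ x * ρ y).trace).re := by
    intro f
    rw [hqf]
    simp only
    have h1 : Δ f * Δ f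
        = ∑ x, ∑ y, (((PX x * ε f x : ℝ) : ℂ) * ((PX y * ε f y : ℝ) : ℂ)) • (ρ x * ρ y) := by
      rw [hΔ, Finset.sum_mul_sum]
      refine Finset.sum_congr rfl fun x _ => Finset.sum_congr rfl fun y _ => ?_
      rw [Matrix.smul_mul, Matrix.mul_smul, smul_smul]
    rw [h1, Matrix.trace_sum]
    rw [Complex.re_sum]
    refine Finset.sum_congr rfl fun x _ => ?_
    rw [Matrix.trace_sum, Complex.re_sum]
    refine Finset.sum_congr rfl fun y _ => ?_
    rw [Matrix.trace_smul, smul_eq_mul, ← Complex.ofReal_mul, Complex.re_ofReal_mul]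
  have hsum_q : ∑ f, PF f * qf f ≤ ∑ x, PX x ^ 2 := by
    have hswap : ∑ f, PF f * qf f
        = ∑ x, ∑ y, ∑ f, PF f * ((PX x * ε f x) * (PX y * ε f y) * ((ρ x * ρ y).trace).re) := by
      simp_rw [hqf_expand, Finset.mul_sum]
      rw [Finset.sum_comm]
      exact Finset.sum_congr rfl fun x _ => Finset.sum_comm
    rw [hswap]
    have hterm : ∀ x y, ∑ f, PF f * ((PX x * ε f x) * (PX y * ε f y) * ((ρ x * ρ y).trace).re)
        ≤ if x = y then PX x ^ 2 else 0 := by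
      intro x y
      by_cases hxy : x = y
      · subst hxy
        simp only [if_true]
        have e3 : ∀ f : 𝒳 → Bool, PF f * ((PX x * ε f x) * (PX x * ε f x) * ((ρ x * ρ x).trace).re)
            = PF f * (PX x ^ 2 * ((ρ x * ρ x).trace).re) := by
          intro f
          have h5 : ε f x * ε f x = 1 := by
            simp only [hε]
            split <;> norm_num
          calc PF f * ((PX x * ε f x) * (PX x * ε f x) * ((ρ x * ρ x).trace).re)
              = PF f * (PX x ^ 2 * (ε f x * ε f x) * ((ρ x * ρ x).trace).re) := by ring
            _ = PF f * (PX x ^ 2 * ((ρ x * ρ x).trace).re) := by rw [h5]; ring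
        rw [Finset.sum_congr rfl fun f _ => e3 f, ← Finset.sum_mul, hPF1, one_mul]
        calc PX x ^ 2 * ((ρ x * ρ x).trace).re ≤ PX x ^ 2 * 1 :=
              mul_le_mul_of_nonneg_left (hR1 x) (by positivity)
          _ = PX x ^ 2 := by ring
      · simp only [hxy, if_false]
        have e4 : ∀ f : 𝒳 → Bool, PF f * ((PX x * ε f x) * (PX y * ε f y) * ((ρ x * ρ y).trace).re)
            = (PX x * PX y * ((ρ x * ρ y).trace).re) * (PF f * (ε f x * ε f y)) := by
          intro f; ring
        rw [Finset.sum_congr rfl fun f _ => e4 f, ← Finset.mul_sum]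
        have hs : ∑ f, PF f * (ε f x * ε f y) ≤ 0 := by
          have e5 : ∀ f : 𝒳 → Bool, PF f * (ε f x * ε f y)
              = if f x = f y then PF f else -PF f := by
            intro f
            simp only [hε]
            cases hfx : f x <;> cases hfy : f y <;> simp [hfx, hfy] <;> ring
          rw [Finset.sum_congr rfl fun f _ => e5 f]
          rw [Finset.sum_ite, Finset.sum_neg_distrib]
          have hT := hFuniv x y hxy
          have hTT : (∑ f ∈ univ.filter (fun f => f x = f y), PF f)
              + ∑ f ∈ univ.filter (fun f => ¬ f x = f y), PF f = 1 := by
            rw [Finset.sum_filter_add_sum_filter_not, hPF1]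
          linarith
        have hnn : 0 ≤ PX x * PX y * ((ρ x * ρ y).trace).re :=
          mul_nonneg (mul_nonneg (hPX0 x) (hPX0 y)) (hRnn x y)
        exact mul_nonpos_iff.mpr (Or.inl ⟨hnn, hs⟩)
    calc ∑ x, ∑ y, ∑ f, PF f * ((PX x * ε f x) * (PX y * ε f y) * ((ρ x * ρ y).trace).re)
        ≤ ∑ x, ∑ y, (if x = y then PX x ^ 2 else 0) :=
          Finset.sum_le_sum fun x _ => Finset.sum_le_sum fun y _ => hterm x y
      _ = ∑ x, PX x ^ 2 := by simp
  -- concavity of sqrt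
  have conc : ∑ f, PF f * Real.sqrt (qf f) ≤ Real.sqrt (∑ f, PF f * qf f) := by
    have hcs := Finset.sum_mul_sq_le_sq_mul_sq univ (fun f => Real.sqrt (PF f))
      (fun f => Real.sqrt (PF f) * Real.sqrt (qf f))
    have e1 : ∀ f : 𝒳 → Bool, Real.sqrt (PF f) * (Real.sqrt (PF f) * Real.sqrt (qf f))
        = PF f * Real.sqrt (qf f) := by
      intro f
      rw [← mul_assoc, Real.mul_self_sqrt (hPF0 f)]
    have e2 : ∀ f : 𝒳 → Bool, Real.sqrt (PF f) ^ 2 = PF f := fun f => Real.sq_sqrt (hPF0 f)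
    have e3 : ∀ f : 𝒳 → Bool, (Real.sqrt (PF f) * Real.sqrt (qf f)) ^ 2 = PF f * qf f := by
      intro f
      rw [mul_pow, Real.sq_sqrt (hPF0 f), Real.sq_sqrt (hq_nonneg f)]
    rw [Finset.sum_congr rfl fun f _ => e1 f, Finset.sum_congr rfl fun f _ => e2 f,
      Finset.sum_congr rfl fun f _ => e3 f, hPF1, one_mul] at hcs
    calc ∑ f, PF f * Real.sqrt (qf f)
        = Real.sqrt ((∑ f, PF f * Real.sqrt (qf f))^2) :=
          (Real.sqrt_sq (Finset.sum_nonneg fun f _ =>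
            mul_nonneg (hPF0 f) (Real.sqrt_nonneg _))).symm
      _ ≤ Real.sqrt (∑ f, PF f * qf f) := Real.sqrt_le_sqrt hcs
  -- final chain
  calc ∑ f, PF f * dQuant PX ρ f
      ≤ ∑ f, PF f * ((1/2) * Real.sqrt d * Real.sqrt (qf f)) :=
        Finset.sum_le_sum fun f _ => mul_le_mul_of_nonneg_left (stepA f) (hPF0 f)
    _ = (1/2) * Real.sqrt d * ∑ f, PF f * Real.sqrt (qf f) := by
        rw [Finset.mul_sum]
        exact Finset.sum_congr rfl fun f _ => by ring
    _ ≤ (1/2) * Real.sqrt d * Real.sqrt (∑ f, PF f * qf f) :=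
        mul_le_mul_of_nonneg_left conc (by positivity)
    _ ≤ (1/2) * Real.sqrt d * Real.sqrt (∑ x, PX x ^ 2) :=
        mul_le_mul_of_nonneg_left (Real.sqrt_le_sqrt hsum_q) (by positivity)
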